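/- For the three-axis support Ω = (L_A^2 × {0_B} × {0_C}) ∪ ({0_A} × L_B^2 × {0_C}) ∪ ({0_A} × {0_B} × L_C^2), the three notions coincide: Y_A ⫫_o Y_C | Y_B ⟺ Y_A ⫫_i Y_C | Y_B ⟺ Y_A ⫫_e Y_C | Y_B; in fact all three always hold for any random vector Y with this support. -/

import Mathlib

open MeasureTheory ProbabilityTheory Set
open scoped ENNReal

noncomputable section

/-- `L^1 = [0,1]^ι`. -/
def box1 (ι : Type*) : Set (ι → ℝ) := {x | ∀ i, x i ∈ Set.Icc (0:ℝ) 1}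

/-- `L^2 = [0,∞)^ι \ [0,1]^ι`. -/
def box2 (ι : Type*) : Set (ι → ℝ) := {x | ∀ i, 0 ≤ x i} \ box1 ι

/-- The three-axis set `Ω`. -/
def omAxes3 (ιA ιB ιC : Type*) : Set ((ιA → ℝ) × (ιB → ℝ) × (ιC → ℝ)) :=
  (box2 ιA ×ˢ (({fun _ => 0} : Set (ιB → ℝ)) ×ˢ ({fun _ => 0} : Set (ιC → ℝ)))) ∪
  (({fun _ => 0} : Set (ιA → ℝ)) ×ˢ (box2 ιB ×ˢ ({fun _ => 0} : Set (ιC → ℝ)))) ∪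
  (({fun _ => 0} : Set (ιA → ℝ)) ×ˢ (({fun _ => 0} : Set (ιB → ℝ)) ×ˢ box2 ιC))

/-- the topological support of `ν` is `S`. -/
def HasSupport {γ : Type*} [MeasurableSpace γ] [TopologicalSpace γ]
    (ν : Measure γ) (S : Set γ) : Prop :=
  ν Sᶜ = 0 ∧ ∀ U : Set γ, IsOpen U → (U ∩ S).Nonempty → 0 < ν U

/-- `X_A ⫫ X_C` given `(X_B, E)`. -/
def condIndepOnGivenB {Ω₀ : Type*} [MeasurableSpace Ω₀] (μ : Measure Ω₀) (E : Set Ω₀)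
    {α β γ : Type*} [MeasurableSpace α] [MeasurableSpace β] [MeasurableSpace γ]
    (XA : Ω₀ → α) (XB : Ω₀ → β) (XC : Ω₀ → γ) : Prop :=
  ∀ (HB : Set β), MeasurableSet HB → ∀ (HA : Set α) (HC : Set γ),
    MeasurableSet HA → MeasurableSet HC →
    μ[|E ∩ XB ⁻¹' HB] (XA ⁻¹' HA ∩ XC ⁻¹' HC) =
      μ[|E ∩ XB ⁻¹' HB] (XA ⁻¹' HA) * μ[|E ∩ XB ⁻¹' HB] (XC ⁻¹' HC)

/-- outer conditional independence of `Y_A` and `Y_C` given `Y_B`, relative to `Om`. -/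
def OuterIndepB {Ω₀ : Type} [MeasurableSpace Ω₀] (μ : Measure Ω₀)
    {α β γ : Type} [MeasurableSpace α] [MeasurableSpace β] [MeasurableSpace γ]
    (YA : Ω₀ → α) (YB : Ω₀ → β) (YC : Ω₀ → γ) (Om : Set (α × β × γ)) : Prop :=
  ∃ (Ω' : Type) (_ : MeasurableSpace Ω') (P : Measure Ω')
    (WA : Ω' → α) (WB : Ω' → β) (WC : Ω' → γ) (LA : Set α) (LB : Set β) (LC : Set γ),
    IsProbabilityMeasure P ∧ Measurable WA ∧ Measurable WB ∧ Measurable WC ∧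
    Om ⊆ LA ×ˢ (LB ×ˢ LC) ∧
    P ((fun ω => (WA ω, WB ω, WC ω)) ⁻¹' (LA ×ˢ (LB ×ˢ LC))) = 1 ∧
    condIndepOnGivenB P Set.univ WA WB WC ∧
    (P[|(fun ω => (WA ω, WB ω, WC ω)) ⁻¹' Om]).map (fun ω => (WA ω, WB ω, WC ω)) =
      μ.map (fun ω => (YA ω, YB ω, YC ω))

/-- inner conditional independence of `Y_A` and `Y_C` given `Y_B`, relative to `Om`. -/
def InnerIndepB {Ω₀ : Type} [MeasurableSpace Ω₀] (μ : Measure Ω₀)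
    {α β γ : Type} [MeasurableSpace α] [MeasurableSpace β] [MeasurableSpace γ]
    (YA : Ω₀ → α) (YB : Ω₀ → β) (YC : Ω₀ → γ) (Om : Set (α × β × γ)) : Prop :=
  ∀ (SA : Set α) (SB : Set β) (SC : Set γ),
    MeasurableSet SA → MeasurableSet SB → MeasurableSet SC →
    SA ×ˢ (SB ×ˢ SC) ⊆ Om →
    0 < μ ((fun ω => (YA ω, YB ω, YC ω)) ⁻¹' (SA ×ˢ (SB ×ˢ SC))) →
    condIndepOnGivenB μ ((fun ω => (YA ω, YB ω, YC ω)) ⁻¹' (SA ×ˢ (SB ×ˢ SC))) YA YB YC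

/-- Engelke–Hitz conditional independence given `Y_B`. -/
def EHIndepB {Ω₀ : Type} [MeasurableSpace Ω₀] (μ : Measure Ω₀) {ιA ιB ιC : Type}
    (YA : Ω₀ → ιA → ℝ) (YB : Ω₀ → ιB → ℝ) (YC : Ω₀ → ιC → ℝ) : Prop :=
  (∀ k : ιA, condIndepOnGivenB μ {ω | 1 < YA ω k} YA YB YC) ∧
  (∀ k : ιB, condIndepOnGivenB μ {ω | 1 < YB ω k} YA YB YC) ∧
  (∀ k : ιC, condIndepOnGivenB μ {ω | 1 < YC ω k} YA YB YC)


lemma measurableSet_box1 (ι : Type*) [Countable ι] : MeasurableSet (box1 ι) := by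
  have : box1 ι = ⋂ i, (fun x : ι → ℝ => x i) ⁻¹' Set.Icc 0 1 := by
    ext x; simp [box1, Set.mem_iInter]
  rw [this]
  exact MeasurableSet.iInter fun i => (measurable_pi_apply i) measurableSet_Icc

lemma measurableSet_box2 (ι : Type*) [Countable ι] : MeasurableSet (box2 ι) := by
  have h : MeasurableSet {x : ι → ℝ | ∀ i, 0 ≤ x i} := by
    have : {x : ι → ℝ | ∀ i, 0 ≤ x i} = ⋂ i, (fun x : ι → ℝ => x i) ⁻¹' Set.Ici 0 := by
      ext x; simp [Set.mem_iInter]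
    rw [this]
    exact MeasurableSet.iInter fun i => (measurable_pi_apply i) measurableSet_Ici
  exact h.diff (measurableSet_box1 ι)

lemma zero_not_mem_box2 (ι : Type*) : (fun _ => (0:ℝ)) ∉ box2 ι := by
  intro h
  exact h.2 fun i => by simp

lemma measurableSet_omAxes3 (ιA ιB ιC : Type*) [Countable ιA] [Countable ιB] [Countable ιC] :
    MeasurableSet (omAxes3 ιA ιB ιC) :=
  (((measurableSet_box2 ιA).prod ((measurableSet_singleton _).prod
      (measurableSet_singleton _))).union
    ((measurableSet_singleton _).prod ((measurableSet_box2 ιB).prod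
      (measurableSet_singleton _)))).union
    ((measurableSet_singleton _).prod ((measurableSet_singleton _).prod
      (measurableSet_box2 ιC)))

lemma mem_omAxes3 {ιA ιB ιC : Type*} {p : (ιA → ℝ) × (ιB → ℝ) × (ιC → ℝ)} :
    p ∈ omAxes3 ιA ιB ιC ↔
      (p.1 ∈ box2 ιA ∧ p.2.1 = (fun _ => 0) ∧ p.2.2 = (fun _ => 0)) ∨
      (p.1 = (fun _ => 0) ∧ p.2.1 ∈ box2 ιB ∧ p.2.2 = (fun _ => 0)) ∨
      (p.1 = (fun _ => 0) ∧ p.2.1 = (fun _ => 0) ∧ p.2.2 ∈ box2 ιC) := by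
  obtain ⟨a, b, c⟩ := p
  simp only [omAxes3, Set.mem_union, Set.mem_prod, Set.mem_singleton_iff, or_assoc]

lemma cond_indep_of_const {Ω₀ γ' : Type*} [MeasurableSpace Ω₀] [MeasurableSpace γ']
    (μ : Measure Ω₀) [IsFiniteMeasure μ] (E : Set Ω₀) (hE : MeasurableSet E)
    (Z : Ω₀ → γ') (c : γ')
    (hz : μ (E ∩ {ω | Z ω ≠ c}) = 0) (S : Set Ω₀) (HC : Set γ') :
    μ[|E] (S ∩ Z ⁻¹' HC) = μ[|E] S * μ[|E] (Z ⁻¹' HC) := by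
  by_cases h0 : μ E = 0
  · have hcz : μ[|E] = 0 := by
      rw [ProbabilityTheory.cond, Measure.restrict_eq_zero.mpr h0, smul_zero]
    simp [hcz]
  · haveI := cond_isProbabilityMeasure (μ := μ) h0
    have hzc : μ[|E] {ω | Z ω ≠ c} = 0 := by
      rw [cond_apply hE, hz, mul_zero]
    by_cases hc : c ∈ HC
    · have hTc : μ[|E] (Z ⁻¹' HC)ᶜ = 0 :=
        measure_mono_null (fun ω hω => fun hzeq => hω (by rw [Set.mem_preimage, hzeq]; exact hc)) hzc
      have h1 : μ[|E] (S ∩ Z ⁻¹' HC) = μ[|E] S := measure_inter_conull hTc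
      have h2 : μ[|E] (Z ⁻¹' HC) = 1 := by
        have := measure_inter_conull (μ := μ[|E]) (s := Set.univ) hTc
        rw [Set.univ_inter] at this
        rw [this, measure_univ]
      rw [h1, h2, mul_one]
    · have hT : μ[|E] (Z ⁻¹' HC) = 0 :=
        measure_mono_null (fun ω hω => fun hzeq => hc (by rw [← hzeq]; exact hω)) hzc
      rw [hT, mul_zero]
      exact measure_mono_null Set.inter_subset_right hT

lemma condIndepOnGivenB_of_constC {Ω₀ α β γ : Type*} [MeasurableSpace Ω₀] [MeasurableSpace α]
    [MeasurableSpace β] [MeasurableSpace γ]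
    (μ : Measure Ω₀) [IsFiniteMeasure μ] (E : Set Ω₀) (hE : MeasurableSet E)
    (XA : Ω₀ → α) (XB : Ω₀ → β) (XC : Ω₀ → γ) (hXB : Measurable XB) (c : γ)
    (hz : μ (E ∩ {ω | XC ω ≠ c}) = 0) :
    condIndepOnGivenB μ E XA XB XC := by
  intro HB hHB HA HC hHA hHC
  have hE' : MeasurableSet (E ∩ XB ⁻¹' HB) := hE.inter (hXB hHB)
  have hz' : μ ((E ∩ XB ⁻¹' HB) ∩ {ω | XC ω ≠ c}) = 0 :=
    measure_mono_null (by intro ω hω; simp only [Set.mem_inter_iff] at hω ⊢; exact ⟨hω.1.1, hω.2⟩) hz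
  exact cond_indep_of_const μ _ hE' XC c hz' _ HC

lemma condIndepOnGivenB_of_constA {Ω₀ α β γ : Type*} [MeasurableSpace Ω₀] [MeasurableSpace α]
    [MeasurableSpace β] [MeasurableSpace γ]
    (μ : Measure Ω₀) [IsFiniteMeasure μ] (E : Set Ω₀) (hE : MeasurableSet E)
    (XA : Ω₀ → α) (XB : Ω₀ → β) (XC : Ω₀ → γ) (hXB : Measurable XB) (c : α)
    (hz : μ (E ∩ {ω | XA ω ≠ c}) = 0) :
    condIndepOnGivenB μ E XA XB XC := by
  intro HB hHB HA HC hHA hHC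
  have hE' : MeasurableSet (E ∩ XB ⁻¹' HB) := hE.inter (hXB hHB)
  have hz' : μ ((E ∩ XB ⁻¹' HB) ∩ {ω | XA ω ≠ c}) = 0 :=
    measure_mono_null (by intro ω hω; simp only [Set.mem_inter_iff] at hω ⊢; exact ⟨hω.1.1, hω.2⟩) hz
  rw [Set.inter_comm (XA ⁻¹' HA), mul_comm]
  exact cond_indep_of_const μ _ hE' XA c hz' _ HA

lemma eh_holds {Ω₀ ιA ιB ιC : Type} [MeasurableSpace Ω₀]
    [Countable ιA] [Countable ιB] [Countable ιC]
    (μ : Measure Ω₀) [IsProbabilityMeasure μ]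
    (YA : Ω₀ → ιA → ℝ) (YB : Ω₀ → ιB → ℝ) (YC : Ω₀ → ιC → ℝ)
    (hA : Measurable YA) (hB : Measurable YB) (hC : Measurable YC)
    (hnull : μ ((fun ω => (YA ω, YB ω, YC ω)) ⁻¹' (omAxes3 ιA ιB ιC)ᶜ) = 0) :
    EHIndepB μ YA YB YC := by
  refine ⟨fun k => ?_, fun k => ?_, fun k => ?_⟩
  · refine condIndepOnGivenB_of_constC μ _
      (measurableSet_lt measurable_const ((measurable_pi_apply k).comp hA)) YA YB YC hB
      (fun _ => 0) (measure_mono_null ?_ hnull)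
    intro ω hω
    simp only [Set.mem_inter_iff, Set.mem_setOf_eq] at hω
    simp only [Set.mem_preimage, Set.mem_compl_iff]
    intro hmem
    rcases mem_omAxes3.1 hmem with h | h | h
    · exact hω.2 h.2.2
    · have h0 : YA ω k = 0 := by have := congrFun h.1 k; simpa using this
      have h1 : (1:ℝ) < YA ω k := hω.1
      linarith
    · have h0 : YA ω k = 0 := by have := congrFun h.1 k; simpa using this
      have h1 : (1:ℝ) < YA ω k := hω.1
      linarith
  · refine condIndepOnGivenB_of_constC μ _
      (measurableSet_lt measurable_const ((measurable_pi_apply k).comp hB)) YA YB YC hB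
      (fun _ => 0) (measure_mono_null ?_ hnull)
    intro ω hω
    simp only [Set.mem_inter_iff, Set.mem_setOf_eq] at hω
    simp only [Set.mem_preimage, Set.mem_compl_iff]
    intro hmem
    rcases mem_omAxes3.1 hmem with h | h | h
    · have h0 : YB ω k = 0 := by have := congrFun h.2.1 k; simpa using this
      have h1 : (1:ℝ) < YB ω k := hω.1
      linarith
    · exact hω.2 h.2.2
    · have h0 : YB ω k = 0 := by have := congrFun h.2.1 k; simpa using this
      have h1 : (1:ℝ) < YB ω k := hω.1
      linarith
  · refine condIndepOnGivenB_of_constA μ _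
      (measurableSet_lt measurable_const ((measurable_pi_apply k).comp hC)) YA YB YC hB
      (fun _ => 0) (measure_mono_null ?_ hnull)
    intro ω hω
    simp only [Set.mem_inter_iff, Set.mem_setOf_eq] at hω
    simp only [Set.mem_preimage, Set.mem_compl_iff]
    intro hmem
    rcases mem_omAxes3.1 hmem with h | h | h
    · have h0 : YC ω k = 0 := by have := congrFun h.2.2 k; simpa using this
      have h1 : (1:ℝ) < YC ω k := hω.1
      linarith
    · exact hω.2 h.1
    · exact hω.2 h.1

lemma inner_holds {Ω₀ ιA ιB ιC : Type} [MeasurableSpace Ω₀]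
    [Countable ιA] [Countable ιB] [Countable ιC]
    (μ : Measure Ω₀) [IsProbabilityMeasure μ]
    (YA : Ω₀ → ιA → ℝ) (YB : Ω₀ → ιB → ℝ) (YC : Ω₀ → ιC → ℝ)
    (hA : Measurable YA) (hB : Measurable YB) (hC : Measurable YC) :
    InnerIndepB μ YA YB YC (omAxes3 ιA ιB ιC) := by
  intro SA SB SC hSA hSB hSC hsub hpos
  have hE : MeasurableSet ((fun ω => (YA ω, YB ω, YC ω)) ⁻¹' (SA ×ˢ (SB ×ˢ SC))) :=
    (hA.prodMk (hB.prodMk hC)) (hSA.prod (hSB.prod hSC))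
  obtain ⟨ω₀, hω₀⟩ := nonempty_of_measure_ne_zero hpos.ne'
  have hb : YB ω₀ ∈ SB := hω₀.2.1
  by_cases hCz : ∀ c ∈ SC, c = (fun _ => (0:ℝ))
  · refine condIndepOnGivenB_of_constC μ _ hE YA YB YC hB (fun _ => 0)
      (measure_mono_null (t := ∅) ?_ measure_empty)
    intro ω hω
    exact absurd (hCz _ hω.1.2.2) hω.2
  · push_neg at hCz
    obtain ⟨c0, hc0S, hc0⟩ := hCz
    have hAz : ∀ a ∈ SA, a = (fun _ => (0:ℝ)) := by
      intro a ha
      have hmem : (a, YB ω₀, c0) ∈ omAxes3 ιA ιB ιC := hsub ⟨ha, hb, hc0S⟩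
      rcases mem_omAxes3.1 hmem with h | h | h
      · exact absurd h.2.2 hc0
      · exact h.1
      · exact h.1
    refine condIndepOnGivenB_of_constA μ _ hE YA YB YC hB (fun _ => 0)
      (measure_mono_null (t := ∅) ?_ measure_empty)
    intro ω hω
    exact absurd (hAz _ hω.1.1) hω.2

lemma smul_prod_smul {α β : Type*} [MeasurableSpace α] [MeasurableSpace β]
    (m1 : Measure α) (m2 : Measure β) [IsFiniteMeasure m1] [IsFiniteMeasure m2]
    (c1 c2 : ℝ≥0∞) (h1 : c1 ≠ ∞) (h2 : c2 ≠ ∞) :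
    (c1 • m1).prod (c2 • m2) = (c1 * c2) • (m1.prod m2) := by
  haveI := m1.smul_finite h1
  haveI := m2.smul_finite h2
  refine Measure.prod_eq (fun s t hs ht => ?_)
  simp only [Measure.smul_apply, Measure.prod_prod, smul_eq_mul]
  ring

lemma axisFacts {T : Type} [MeasurableSpace T] [MeasurableSingletonClass T]
    (m : Measure T) [IsFiniteMeasure m] (S : Set T) (hS : MeasurableSet S) (z : T)
    (hzS : z ∉ S) (hm : m Sᶜ = 0) :
    IsProbabilityMeasure ((1 + m Set.univ)⁻¹ • (m + Measure.dirac z)) ∧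
    ((1 + m Set.univ)⁻¹ • (m + Measure.dirac z)).restrict S = (1 + m Set.univ)⁻¹ • m ∧
    ((1 + m Set.univ)⁻¹ • (m + Measure.dirac z)).restrict {z} =
      (1 + m Set.univ)⁻¹ • Measure.dirac z ∧
    ((1 + m Set.univ)⁻¹ • (m + Measure.dirac z)) (S ∪ {z}) = 1 ∧
    (1 + m Set.univ)⁻¹ ≠ 0 ∧ (1 + m Set.univ)⁻¹ ≠ ∞ := by
  have hu : m Set.univ ≠ ∞ := measure_ne_top m _
  have h1u : (1:ℝ≥0∞) + m Set.univ ≠ 0 := by simp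
  have h1uT : (1:ℝ≥0∞) + m Set.univ ≠ ∞ := by
    simp [ENNReal.add_ne_top, hu]
  have hc0 : (1 + m Set.univ)⁻¹ ≠ 0 := ENNReal.inv_ne_zero.mpr h1uT
  have hcT : (1 + m Set.univ)⁻¹ ≠ ∞ := ENNReal.inv_ne_top.mpr h1u
  have hmz : m {z} = 0 := measure_mono_null (by simpa using hzS) hm
  have hprob : IsProbabilityMeasure ((1 + m Set.univ)⁻¹ • (m + Measure.dirac z)) := by
    constructor
    rw [Measure.smul_apply, Measure.add_apply,
      Measure.dirac_apply_of_mem (Set.mem_univ z), smul_eq_mul, add_comm (m Set.univ) 1]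
    exact ENNReal.inv_mul_cancel h1u h1uT
  refine ⟨hprob, ?_, ?_, ?_, hc0, hcT⟩
  · have hd0 : (Measure.dirac z).restrict S = 0 := by
      rw [Measure.restrict_eq_zero, Measure.dirac_apply' z hS]
      exact Set.indicator_of_notMem hzS 1
    have hms : m.restrict S = m :=
      Measure.restrict_eq_self_of_ae_mem (by rw [ae_iff]; exact hm)
    rw [Measure.restrict_smul, Measure.restrict_add, hms, hd0, add_zero]
  · rw [Measure.restrict_smul, Measure.restrict_singleton, Measure.add_apply, hmz,
      Measure.dirac_apply_of_mem (Set.mem_singleton z), zero_add, one_smul]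
  · have hcompl : ((1 + m Set.univ)⁻¹ • (m + Measure.dirac z)) ((S ∪ {z})ᶜ) = 0 := by
      rw [Measure.smul_apply, Measure.add_apply]
      have h1 : m ((S ∪ {z})ᶜ) = 0 :=
        measure_mono_null (Set.compl_subset_compl.mpr Set.subset_union_left) hm
      have h2 : Measure.dirac z ((S ∪ {z})ᶜ) = 0 := by
        rw [Measure.dirac_apply' z (hS.union (measurableSet_singleton z)).compl]
        simp
      rw [h1, h2, add_zero, smul_eq_mul, mul_zero]
    haveI := hprob
    have := measure_inter_conull
      (μ := (1 + m Set.univ)⁻¹ • (m + Measure.dirac z)) (s := Set.univ) hcompl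
    rw [Set.univ_inter] at this
    rw [this, measure_univ]


lemma outer_holds {Ω₀ ιA ιB ιC : Type} [MeasurableSpace Ω₀]
    [Countable ιA] [Countable ιB] [Countable ιC]
    (μ : Measure Ω₀) [IsProbabilityMeasure μ]
    (YA : Ω₀ → ιA → ℝ) (YB : Ω₀ → ιB → ℝ) (YC : Ω₀ → ιC → ℝ)
    (hA : Measurable YA) (hB : Measurable YB) (hC : Measurable YC)
    (hsupp1 : (μ.map fun ω => (YA ω, YB ω, YC ω)) (omAxes3 ιA ιB ιC)ᶜ = 0) :
    OuterIndepB μ YA YB YC (omAxes3 ιA ιB ιC) := by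
  classical
  set ν : Measure ((ιA → ℝ) × (ιB → ℝ) × (ιC → ℝ)) :=
    μ.map (fun ω => (YA ω, YB ω, YC ω)) with hνdef
  haveI hνprob : IsProbabilityMeasure ν :=
    Measure.isProbabilityMeasure_map (hA.prodMk (hB.prodMk hC)).aemeasurable
  set DA : Set ((ιA → ℝ) × (ιB → ℝ) × (ιC → ℝ)) :=
    box2 ιA ×ˢ (({fun _ => 0} : Set (ιB → ℝ)) ×ˢ ({fun _ => 0} : Set (ιC → ℝ))) with hDAdef
  set DB : Set ((ιA → ℝ) × (ιB → ℝ) × (ιC → ℝ)) :=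
    ({fun _ => 0} : Set (ιA → ℝ)) ×ˢ (box2 ιB ×ˢ ({fun _ => 0} : Set (ιC → ℝ))) with hDBdef
  set DC : Set ((ιA → ℝ) × (ιB → ℝ) × (ιC → ℝ)) :=
    ({fun _ => 0} : Set (ιA → ℝ)) ×ˢ (({fun _ => 0} : Set (ιB → ℝ)) ×ˢ box2 ιC) with hDCdef
  have hOm : omAxes3 ιA ιB ιC = DA ∪ DB ∪ DC := rfl
  have hDAm : MeasurableSet DA :=
    (measurableSet_box2 ιA).prod ((measurableSet_singleton _).prod (measurableSet_singleton _))
  have hDBm : MeasurableSet DB :=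
    (measurableSet_singleton _).prod ((measurableSet_box2 ιB).prod (measurableSet_singleton _))
  have hDCm : MeasurableSet DC :=
    (measurableSet_singleton _).prod ((measurableSet_singleton _).prod (measurableSet_box2 ιC))
  have hOmMeas : MeasurableSet (omAxes3 ιA ιB ιC) := measurableSet_omAxes3 ιA ιB ιC
  set mA : Measure (ιA → ℝ) := (ν.restrict DA).map Prod.fst with hmAdef
  set mB : Measure (ιB → ℝ) := (ν.restrict DB).map (fun p => p.2.1) with hmBdef
  set mC : Measure (ιC → ℝ) := (ν.restrict DC).map (fun p => p.2.2) with hmCdef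
  have hmBmeas : Measurable (fun p : (ιA → ℝ) × (ιB → ℝ) × (ιC → ℝ) => p.2.1) :=
    measurable_fst.comp measurable_snd
  have hmCmeas : Measurable (fun p : (ιA → ℝ) × (ιB → ℝ) × (ιC → ℝ) => p.2.2) :=
    measurable_snd.comp measurable_snd
  haveI : IsFiniteMeasure mA := by
    constructor
    rw [hmAdef, Measure.map_apply measurable_fst MeasurableSet.univ, Set.preimage_univ,
      Measure.restrict_apply_univ]
    exact measure_lt_top ν DA
  haveI : IsFiniteMeasure mB := by
    constructor
    rw [hmBdef, Measure.map_apply hmBmeas MeasurableSet.univ, Set.preimage_univ,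
      Measure.restrict_apply_univ]
    exact measure_lt_top ν DB
  haveI : IsFiniteMeasure mC := by
    constructor
    rw [hmCdef, Measure.map_apply hmCmeas MeasurableSet.univ, Set.preimage_univ,
      Measure.restrict_apply_univ]
    exact measure_lt_top ν DC
  have hmAc : mA (box2 ιA)ᶜ = 0 := by
    rw [hmAdef, Measure.map_apply measurable_fst (measurableSet_box2 ιA).compl,
      Measure.restrict_apply (measurable_fst (measurableSet_box2 ιA).compl)]
    have : Prod.fst ⁻¹' (box2 ιA)ᶜ ∩ DA = ∅ :=
      Set.eq_empty_iff_forall_notMem.2 (fun p hp => hp.1 hp.2.1)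
    rw [this]
    exact measure_empty
  have hmBc : mB (box2 ιB)ᶜ = 0 := by
    rw [hmBdef, Measure.map_apply hmBmeas (measurableSet_box2 ιB).compl,
      Measure.restrict_apply (hmBmeas (measurableSet_box2 ιB).compl)]
    have : (fun p : (ιA → ℝ) × (ιB → ℝ) × (ιC → ℝ) => p.2.1) ⁻¹' (box2 ιB)ᶜ ∩ DB = ∅ :=
      Set.eq_empty_iff_forall_notMem.2 (fun p hp => hp.1 hp.2.2.1)
    rw [this]
    exact measure_empty
  have hmCc : mC (box2 ιC)ᶜ = 0 := by
    rw [hmCdef, Measure.map_apply hmCmeas (measurableSet_box2 ιC).compl,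
      Measure.restrict_apply (hmCmeas (measurableSet_box2 ιC).compl)]
    have : (fun p : (ιA → ℝ) × (ιB → ℝ) × (ιC → ℝ) => p.2.2) ⁻¹' (box2 ιC)ᶜ ∩ DC = ∅ :=
      Set.eq_empty_iff_forall_notMem.2 (fun p hp => hp.1 hp.2.2.2)
    rw [this]
    exact measure_empty
  obtain ⟨hprobA, hressA, hreszA, honeA, hc0A, hcTA⟩ :=
    axisFacts mA (box2 ιA) (measurableSet_box2 ιA) (fun _ => 0) (zero_not_mem_box2 ιA) hmAc
  obtain ⟨hprobB, hressB, hreszB, honeB, hc0B, hcTB⟩ :=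
    axisFacts mB (box2 ιB) (measurableSet_box2 ιB) (fun _ => 0) (zero_not_mem_box2 ιB) hmBc
  obtain ⟨hprobC, hressC, hreszC, honeC, hc0C, hcTC⟩ :=
    axisFacts mC (box2 ιC) (measurableSet_box2 ιC) (fun _ => 0) (zero_not_mem_box2 ιC) hmCc
  set cA : ℝ≥0∞ := (1 + mA Set.univ)⁻¹ with hcAdef
  set cB : ℝ≥0∞ := (1 + mB Set.univ)⁻¹ with hcBdef
  set cC : ℝ≥0∞ := (1 + mC Set.univ)⁻¹ with hcCdef
  set νA : Measure (ιA → ℝ) := cA • (mA + Measure.dirac (fun _ => 0)) with hνAdef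
  set νB : Measure (ιB → ℝ) := cB • (mB + Measure.dirac (fun _ => 0)) with hνBdef
  set νC : Measure (ιC → ℝ) := cC • (mC + Measure.dirac (fun _ => 0)) with hνCdef
  haveI := hprobA; haveI := hprobB; haveI := hprobC
  set K : ℝ≥0∞ := cA * (cB * cC) with hKdef
  have hK0 : K ≠ 0 := mul_ne_zero hc0A (mul_ne_zero hc0B hc0C)
  have hKT : K ≠ ∞ := ENNReal.mul_ne_top hcTA (ENNReal.mul_ne_top hcTB hcTC)
  set P : Measure ((ιA → ℝ) × (ιB → ℝ) × (ιC → ℝ)) := νA.prod (νB.prod νC) with hPdef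
  haveI : IsProbabilityMeasure P := by rw [hPdef]; infer_instance
  -- restriction of ν to each axis is a push-forward of the marginal
  have hgA : Measurable (fun a : ιA → ℝ =>
      ((a, ((fun _ => 0 : ιB → ℝ), (fun _ => 0 : ιC → ℝ))) :
        (ιA → ℝ) × (ιB → ℝ) × (ιC → ℝ))) := measurable_id.prodMk measurable_const
  have hgB : Measurable (fun b : ιB → ℝ =>
      (((fun _ => 0 : ιA → ℝ), (b, (fun _ => 0 : ιC → ℝ))) :
        (ιA → ℝ) × (ιB → ℝ) × (ιC → ℝ))) :=
    measurable_const.prodMk (measurable_id.prodMk measurable_const)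
  have hgC : Measurable (fun c : ιC → ℝ =>
      (((fun _ => 0 : ιA → ℝ), ((fun _ => 0 : ιB → ℝ), c)) :
        (ιA → ℝ) × (ιB → ℝ) × (ιC → ℝ))) :=
    measurable_const.prodMk (measurable_const.prodMk measurable_id)
  have hresA : ν.restrict DA =
      mA.map (fun a => (a, ((fun _ => 0 : ιB → ℝ), (fun _ => 0 : ιC → ℝ)))) := by
    rw [hmAdef, Measure.map_map hgA measurable_fst]
    have hae : ((fun a : ιA → ℝ =>
        ((a, ((fun _ => 0 : ιB → ℝ), (fun _ => 0 : ιC → ℝ))) :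
          (ιA → ℝ) × (ιB → ℝ) × (ιC → ℝ))) ∘ Prod.fst) =ᵐ[ν.restrict DA] id := by
      filter_upwards [ae_restrict_mem hDAm] with p hp
      have h2 : p.2.1 = (fun _ => 0) := hp.2.1
      have h3 : p.2.2 = (fun _ => 0) := hp.2.2
      simp only [Function.comp, id]
      rw [← h2, ← h3]
    rw [Measure.map_congr hae, Measure.map_id]
  have hresB : ν.restrict DB =
      mB.map (fun b => (((fun _ => 0 : ιA → ℝ), (b, (fun _ => 0 : ιC → ℝ)))) ) := by
    rw [hmBdef, Measure.map_map hgB hmBmeas]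
    have hae : ((fun b : ιB → ℝ =>
        (((fun _ => 0 : ιA → ℝ), (b, (fun _ => 0 : ιC → ℝ))) :
          (ιA → ℝ) × (ιB → ℝ) × (ιC → ℝ))) ∘ (fun p => p.2.1)) =ᵐ[ν.restrict DB] id := by
      filter_upwards [ae_restrict_mem hDBm] with p hp
      have h1 : p.1 = (fun _ => 0) := hp.1
      have h3 : p.2.2 = (fun _ => 0) := hp.2.2
      simp only [Function.comp, id]
      rw [← h1, ← h3]
    rw [Measure.map_congr hae, Measure.map_id]
  have hresC : ν.restrict DC =
      mC.map (fun c => (((fun _ => 0 : ιA → ℝ), ((fun _ => 0 : ιB → ℝ), c)))) := by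
    rw [hmCdef, Measure.map_map hgC hmCmeas]
    have hae : ((fun c : ιC → ℝ =>
        (((fun _ => 0 : ιA → ℝ), ((fun _ => 0 : ιB → ℝ), c)) :
          (ιA → ℝ) × (ιB → ℝ) × (ιC → ℝ))) ∘ (fun p => p.2.2)) =ᵐ[ν.restrict DC] id := by
      filter_upwards [ae_restrict_mem hDCm] with p hp
      have h1 : p.1 = (fun _ => 0) := hp.1
      have h2 : p.2.1 = (fun _ => 0) := hp.2.1
      simp only [Function.comp, id]
      rw [← h1, ← h2]
    rw [Measure.map_congr hae, Measure.map_id]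
  -- restriction of P to each axis
  have hPA : P.restrict DA = K • ν.restrict DA := by
    rw [hPdef, hDAdef, ← Measure.prod_restrict, ← Measure.prod_restrict,
      hressA, hreszB, hreszC,
      smul_prod_smul _ _ _ _ hcTB hcTC,
      smul_prod_smul _ _ _ _ hcTA (ENNReal.mul_ne_top hcTB hcTC),
      Measure.dirac_prod_dirac, Measure.prod_dirac, ← hKdef, hresA]
  have hPB : P.restrict DB = K • ν.restrict DB := by
    rw [hPdef, hDBdef, ← Measure.prod_restrict, ← Measure.prod_restrict,
      hreszA, hressB, hreszC,
      smul_prod_smul _ _ _ _ hcTB hcTC,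
      smul_prod_smul _ _ _ _ hcTA (ENNReal.mul_ne_top hcTB hcTC),
      Measure.prod_dirac, Measure.dirac_prod, ← hKdef, hresB]
    have hmm : Measure.map (Prod.mk (fun _ => 0 : ιA → ℝ))
        (Measure.map (fun x : ιB → ℝ => (x, (fun _ => 0 : ιC → ℝ))) mB) =
        Measure.map ((Prod.mk (fun _ => 0 : ιA → ℝ)) ∘
          (fun x : ιB → ℝ => (x, (fun _ => 0 : ιC → ℝ)))) mB :=
      Measure.map_map measurable_prodMk_left (measurable_id.prodMk measurable_const)
    rw [hmm]
    rfl
  have hPC : P.restrict DC = K • ν.restrict DC := by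
    rw [hPdef, hDCdef, ← Measure.prod_restrict, ← Measure.prod_restrict,
      hreszA, hreszB, hressC,
      smul_prod_smul _ _ _ _ hcTB hcTC,
      smul_prod_smul _ _ _ _ hcTA (ENNReal.mul_ne_top hcTB hcTC),
      Measure.dirac_prod, Measure.dirac_prod, ← hKdef, hresC]
    have hmm : Measure.map (Prod.mk (fun _ => 0 : ιA → ℝ))
        (Measure.map (Prod.mk (fun _ => 0 : ιB → ℝ)) mC) =
        Measure.map ((Prod.mk (fun _ => 0 : ιA → ℝ)) ∘
          (Prod.mk (fun _ => 0 : ιB → ℝ))) mC :=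
      Measure.map_map measurable_prodMk_left measurable_prodMk_left
    rw [hmm]
    rfl
  -- disjointness
  have hdAB : Disjoint DA DB := Set.disjoint_left.mpr
    (fun p hp hq => zero_not_mem_box2 ιA ((hq.1 : p.1 = _) ▸ hp.1))
  have hdAC : Disjoint DA DC := Set.disjoint_left.mpr
    (fun p hp hq => zero_not_mem_box2 ιA ((hq.1 : p.1 = _) ▸ hp.1))
  have hdBC : Disjoint DB DC := Set.disjoint_left.mpr
    (fun p hp hq => zero_not_mem_box2 ιB ((hq.2.1 : p.2.1 = _) ▸ hp.2.1))
  have hdABC : Disjoint (DA ∪ DB) DC := Set.disjoint_union_left.mpr ⟨hdAC, hdBC⟩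
  have hνres : ν.restrict (omAxes3 ιA ιB ιC) = ν :=
    Measure.restrict_eq_self_of_ae_mem (by rw [ae_iff]; exact hsupp1)
  have hPOm : P.restrict (omAxes3 ιA ιB ιC) = K • ν := by
    rw [hOm, Measure.restrict_union hdABC hDCm, Measure.restrict_union hdAB hDBm,
      hPA, hPB, hPC, ← smul_add, ← smul_add,
      ← Measure.restrict_union hdAB hDBm, ← Measure.restrict_union hdABC hDCm,
      ← hOm, hνres]
  have hPOmega : P (omAxes3 ιA ιB ιC) = K := by
    rw [← Measure.restrict_apply_univ, hPOm, Measure.smul_apply, measure_univ, smul_eq_mul, mul_one]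
  have hcond : P[|omAxes3 ιA ιB ιC] = ν := by
    ext X hX
    rw [cond_apply hOmMeas, hPOmega, Set.inter_comm, ← Measure.restrict_apply hX, hPOm,
      Measure.smul_apply, smul_eq_mul, ← mul_assoc, ENNReal.inv_mul_cancel hK0 hKT, one_mul]
  -- assemble
  refine ⟨(ιA → ℝ) × (ιB → ℝ) × (ιC → ℝ), inferInstance, P, Prod.fst,
    (fun p => p.2.1), (fun p => p.2.2),
    box2 ιA ∪ {fun _ => 0}, box2 ιB ∪ {fun _ => 0}, box2 ιC ∪ {fun _ => 0},
    inferInstance, measurable_fst, hmBmeas, hmCmeas, ?_, ?_, ?_, ?_⟩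
  · intro p hp
    rcases mem_omAxes3.1 hp with h | h | h
    · exact Set.mem_prod.mpr ⟨Or.inl h.1, Set.mem_prod.mpr ⟨Or.inr h.2.1, Or.inr h.2.2⟩⟩
    · exact Set.mem_prod.mpr ⟨Or.inr h.1, Set.mem_prod.mpr ⟨Or.inl h.2.1, Or.inr h.2.2⟩⟩
    · exact Set.mem_prod.mpr ⟨Or.inr h.1, Set.mem_prod.mpr ⟨Or.inr h.2.1, Or.inl h.2.2⟩⟩
  · have hid : (fun p : (ιA → ℝ) × (ιB → ℝ) × (ιC → ℝ) => (p.1, p.2.1, p.2.2)) = id := rfl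
    rw [hid, Set.preimage_id, hPdef, Measure.prod_prod, Measure.prod_prod, honeA, honeB, honeC]
    norm_num
  · intro HB hHB HA HC hHA hHC
    have hEm : MeasurableSet (Set.univ ∩
        (fun p : (ιA → ℝ) × (ιB → ℝ) × (ιC → ℝ) => p.2.1) ⁻¹' HB) :=
      MeasurableSet.univ.inter (hmBmeas hHB)
    rw [cond_apply hEm, cond_apply hEm, cond_apply hEm]
    have e0 : Set.univ ∩ (fun p : (ιA → ℝ) × (ιB → ℝ) × (ιC → ℝ) => p.2.1) ⁻¹' HB =
        (Set.univ : Set (ιA → ℝ)) ×ˢ (HB ×ˢ (Set.univ : Set (ιC → ℝ))) := by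
      ext p; simp [Set.mem_prod]
    have e1 : (Set.univ ∩ (fun p : (ιA → ℝ) × (ιB → ℝ) × (ιC → ℝ) => p.2.1) ⁻¹' HB) ∩
        (Prod.fst ⁻¹' HA ∩ (fun p : (ιA → ℝ) × (ιB → ℝ) × (ιC → ℝ) => p.2.2) ⁻¹' HC) =
        HA ×ˢ (HB ×ˢ HC) := by
      ext p; simp [Set.mem_prod]; try tauto
    have e2 : (Set.univ ∩ (fun p : (ιA → ℝ) × (ιB → ℝ) × (ιC → ℝ) => p.2.1) ⁻¹' HB) ∩
        Prod.fst ⁻¹' HA = HA ×ˢ (HB ×ˢ (Set.univ : Set (ιC → ℝ))) := by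
      ext p; simp [Set.mem_prod]; try tauto
    have e3 : (Set.univ ∩ (fun p : (ιA → ℝ) × (ιB → ℝ) × (ιC → ℝ) => p.2.1) ⁻¹' HB) ∩
        (fun p : (ιA → ℝ) × (ιB → ℝ) × (ιC → ℝ) => p.2.2) ⁻¹' HC =
        (Set.univ : Set (ιA → ℝ)) ×ˢ (HB ×ˢ HC) := by
      ext p; simp [Set.mem_prod]; try tauto
    rw [e1, e2, e3, e0, hPdef, Measure.prod_prod, Measure.prod_prod, Measure.prod_prod,
      Measure.prod_prod, Measure.prod_prod, Measure.prod_prod, Measure.prod_prod,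
      Measure.prod_prod]
    rw [measure_univ, measure_univ]
    simp only [one_mul, mul_one]
    by_cases hb : νB HB = 0
    · simp [hb]
    · have hbT : νB HB ≠ ∞ := measure_ne_top νB HB
      have hinv : (νB HB)⁻¹ * νB HB = 1 := ENNReal.inv_mul_cancel hb hbT
      have hL : (νB HB)⁻¹ * (νA HA * (νB HB * νC HC)) = νA HA * νC HC := by
        rw [show (νB HB)⁻¹ * (νA HA * (νB HB * νC HC)) =
          ((νB HB)⁻¹ * νB HB) * (νA HA * νC HC) by ring, hinv, one_mul]
      have hR : ((νB HB)⁻¹ * (νA HA * νB HB)) * ((νB HB)⁻¹ * (νB HB * νC HC)) =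
          νA HA * νC HC := by
        rw [show ((νB HB)⁻¹ * (νA HA * νB HB)) * ((νB HB)⁻¹ * (νB HB * νC HC)) =
          ((νB HB)⁻¹ * νB HB) * (((νB HB)⁻¹ * νB HB) * (νA HA * νC HC)) by ring,
          hinv, one_mul, one_mul]
      rw [hL, hR]
  · have hid : (fun p : (ιA → ℝ) × (ιB → ℝ) × (ιC → ℝ) => (p.1, p.2.1, p.2.2)) = id := rfl
    rw [hid, Set.preimage_id, hcond, Measure.map_id]

/-- for the three-axis support `Ω`, the three notions of conditional
independence coincide; in fact all three always hold. -/
theorem stmt16 {Ω₀ ιA ιB ιC : Type} [MeasurableSpace Ω₀]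
    [Fintype ιA] [Fintype ιB] [Fintype ιC] [Nonempty ιA] [Nonempty ιB] [Nonempty ιC]
    (μ : Measure Ω₀) [IsProbabilityMeasure μ]
    (YA : Ω₀ → ιA → ℝ) (YB : Ω₀ → ιB → ℝ) (YC : Ω₀ → ιC → ℝ)
    (hA : Measurable YA) (hB : Measurable YB) (hC : Measurable YC)
    (hsupp : HasSupport (μ.map fun ω => (YA ω, YB ω, YC ω)) (omAxes3 ιA ιB ιC)) :
    ((OuterIndepB μ YA YB YC (omAxes3 ιA ιB ιC) ↔ InnerIndepB μ YA YB YC (omAxes3 ιA ιB ιC)) ∧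
      (InnerIndepB μ YA YB YC (omAxes3 ιA ιB ιC) ↔ EHIndepB μ YA YB YC)) ∧
    (OuterIndepB μ YA YB YC (omAxes3 ιA ιB ιC) ∧ InnerIndepB μ YA YB YC (omAxes3 ιA ιB ιC) ∧
      EHIndepB μ YA YB YC) := by
  have hY : Measurable (fun ω => (YA ω, YB ω, YC ω)) := hA.prodMk (hB.prodMk hC)
  have hnull : μ ((fun ω => (YA ω, YB ω, YC ω)) ⁻¹' (omAxes3 ιA ιB ιC)ᶜ) = 0 := by
    have h := hsupp.1
    rwa [Measure.map_apply hY (measurableSet_omAxes3 ιA ιB ιC).compl] at h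
  have hO : OuterIndepB μ YA YB YC (omAxes3 ιA ιB ιC) :=
    outer_holds μ YA YB YC hA hB hC hsupp.1
  have hI : InnerIndepB μ YA YB YC (omAxes3 ιA ιB ιC) :=
    inner_holds μ YA YB YC hA hB hC
  have hEH : EHIndepB μ YA YB YC :=
    eh_holds μ YA YB YC hA hB hC hnull
  exact ⟨⟨⟨fun _ => hI, fun _ => hO⟩, ⟨fun _ => hEH, fun _ => hI⟩⟩, hO, hI, hEH⟩

end
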